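/- arXiv:1001.1797 — 2 statements merged into one kernel-verified Lean document; each statement's English description precedes it below -/
import Mathlib

section
/- The twisted structure maps Δ_W and ε_W make A a commutative Frobenius algebra: the counit laws (ε_W ⊗ id_A) ∘ Δ_W = id_A = (id_A ⊗ ε_W) ∘ Δ_W hold, Δ_W is coassociative, and the Frobenius law (m ⊗ id_A) ∘ (id_A ⊗ Δ_W) = Δ_W ∘ m = (id_A ⊗ m) ∘ (Δ_W ⊗ id_A) holds; hence A_W = (A, m, 1, Δ_W, ε_W) is a commutative Frobenius algebra over R. -/
open TensorProduct Polynomial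

noncomputable section

variable {R : Type*} [CommRing R]

/-- The algebra `A = R[X]/(X² - h·X - a)`. -/
abbrev FrobA (a h : R) : Type _ := AdjoinRoot (X ^ 2 - C h * X - C a)

/-- The image of the variable `X` in `A`. -/
abbrev FrobX (a h : R) : FrobA a h := AdjoinRoot.root _

lemma frob_monic (a h : R) : (X ^ 2 - C h * X - C a : R[X]).Monic := by
  have e : (X ^ 2 - C h * X - C a : R[X]) = X ^ 2 - (C h * X + C a) := by ring
  have hd : (C h * X + C a : R[X]).degree ≤ 1 := by compute_degree
  rw [e]
  exact Polynomial.monic_X_pow_sub (n := 2) (lt_of_le_of_lt hd (by norm_num))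

lemma frob_natDegree [Nontrivial R] (a h : R) :
    (X ^ 2 - C h * X - C a : R[X]).natDegree = 2 := by
  compute_degree!

lemma frob_ext {a h : R} {M : Type*} [AddCommGroup M] [Module R M]
    {f g : FrobA a h →ₗ[R] M} (h1 : f 1 = g 1)
    (hX : f (FrobX a h) = g (FrobX a h)) : f = g := by
  rcases subsingleton_or_nontrivial R with hR | hR
  · have := Module.subsingleton R M
    exact Subsingleton.elim f g
  · apply (AdjoinRoot.powerBasis' (frob_monic a h)).basis.ext
    intro j
    have hd : (AdjoinRoot.powerBasis' (frob_monic a h)).dim = 2 := by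
      rw [AdjoinRoot.powerBasis'_dim, frob_natDegree]
    have hj : (j : ℕ) < 2 := lt_of_lt_of_eq j.2 hd
    have : (j : ℕ) = 0 ∨ (j : ℕ) = 1 := by omega
    rcases this with h0 | h0 <;>
      simp only [PowerBasis.coe_basis, AdjoinRoot.powerBasis'_gen, h0, pow_zero, pow_one]
    · exact h1
    · exact hX

lemma frob_ext2 {a h : R} {M : Type*} [AddCommGroup M] [Module R M]
    {f g : FrobA a h ⊗[R] FrobA a h →ₗ[R] M}
    (h11 : f (1 ⊗ₜ 1) = g (1 ⊗ₜ 1))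
    (h1X : f (1 ⊗ₜ FrobX a h) = g (1 ⊗ₜ FrobX a h))
    (hX1 : f (FrobX a h ⊗ₜ 1) = g (FrobX a h ⊗ₜ 1))
    (hXX : f (FrobX a h ⊗ₜ FrobX a h) = g (FrobX a h ⊗ₜ FrobX a h)) : f = g := by
  apply TensorProduct.ext
  apply frob_ext <;> apply frob_ext <;>
    try simp only [LinearMap.compr₂_apply, TensorProduct.mk_apply]
  · exact h11
  · exact h1X
  · exact hX1
  · exact hXX

lemma frob_X_sq (a h : R) :
    FrobX a h * FrobX a h = h • FrobX a h + a • (1 : FrobA a h) := by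
  have h0 : (AdjoinRoot.mk (X ^ 2 - C h * X - C a : R[X])) (X ^ 2 - C h * X - C a : R[X]) = 0 :=
    AdjoinRoot.mk_self
  rw [map_sub, map_sub, map_mul, map_pow, AdjoinRoot.mk_X, AdjoinRoot.mk_C,
    AdjoinRoot.mk_C] at h0
  have h1 : FrobX a h ^ 2 = AdjoinRoot.of _ a + AdjoinRoot.of _ h * FrobX a h :=
    sub_eq_iff_eq_add.mp (sub_eq_zero.mp h0)
  rw [Algebra.smul_def, Algebra.smul_def, mul_one, ← pow_two, h1,
    AdjoinRoot.algebraMap_eq, add_comm]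

set_option maxHeartbeats 1000000 in
/-- the twisted structure maps `Δ_W = i•Δ_C` and `ε_W` satisfy the counit laws,
coassociativity, and the Frobenius law. -/
theorem twisted_frobenius (a h i : R) (hi : i ^ 2 = -1)
    (ΔC : FrobA a h →ₗ[R] FrobA a h ⊗[R] FrobA a h)
    (hΔ1 : ΔC 1 = (1 : FrobA a h) ⊗ₜ[R] FrobX a h + FrobX a h ⊗ₜ[R] (1 : FrobA a h)
      - h • ((1 : FrobA a h) ⊗ₜ[R] (1 : FrobA a h)))
    (hΔX : ΔC (FrobX a h) = FrobX a h ⊗ₜ[R] FrobX a h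
      + a • ((1 : FrobA a h) ⊗ₜ[R] (1 : FrobA a h)))
    (εW : FrobA a h →ₗ[R] R)
    (hεW1 : εW 1 = 0) (hεWX : εW (FrobX a h) = -i) :
    ((TensorProduct.lid R (FrobA a h)).toLinearMap ∘ₗ
        TensorProduct.map εW LinearMap.id ∘ₗ (i • ΔC) = LinearMap.id ∧
      (TensorProduct.rid R (FrobA a h)).toLinearMap ∘ₗ
        TensorProduct.map LinearMap.id εW ∘ₗ (i • ΔC) = LinearMap.id) ∧
    ((TensorProduct.assoc R (FrobA a h) (FrobA a h) (FrobA a h)).toLinearMap ∘ₗ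
        TensorProduct.map (i • ΔC) LinearMap.id ∘ₗ (i • ΔC) =
      TensorProduct.map LinearMap.id (i • ΔC) ∘ₗ (i • ΔC)) ∧
    (TensorProduct.map (LinearMap.mul' R (FrobA a h)) LinearMap.id ∘ₗ
        (TensorProduct.assoc R (FrobA a h) (FrobA a h) (FrobA a h)).symm.toLinearMap ∘ₗ
        TensorProduct.map LinearMap.id (i • ΔC) =
      (i • ΔC) ∘ₗ LinearMap.mul' R (FrobA a h) ∧
    (i • ΔC) ∘ₗ LinearMap.mul' R (FrobA a h) =
      TensorProduct.map LinearMap.id (LinearMap.mul' R (FrobA a h)) ∘ₗ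
        (TensorProduct.assoc R (FrobA a h) (FrobA a h) (FrobA a h)).toLinearMap ∘ₗ
        TensorProduct.map (i • ΔC) LinearMap.id) := by
  have hii : i * i = -1 := by rw [← sq]; exact hi
  have hXsq := frob_X_sq a h
  refine ⟨⟨?_, ?_⟩, ?_, ?_, ?_⟩
  · apply frob_ext <;>
      simp [hΔ1, hΔX, hεW1, hεWX, smul_tmul', tmul_smul, smul_smul, hii,
        TensorProduct.lid_tmul, smul_sub, smul_add]
  · apply frob_ext <;>
      simp [hΔ1, hΔX, hεW1, hεWX, smul_tmul', tmul_smul, smul_smul, hii,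
        TensorProduct.rid_tmul, smul_sub, smul_add]
  · apply frob_ext <;>
      simp only [LinearMap.comp_apply, LinearMap.smul_apply, LinearEquiv.coe_coe,
        LinearMap.id_coe, id_eq, hΔ1, hΔX, map_add, map_sub, map_smul,
        TensorProduct.map_tmul, TensorProduct.assoc_tmul,
        smul_add, smul_sub, tmul_add, add_tmul, tmul_sub, sub_tmul,
        TensorProduct.smul_tmul, TensorProduct.tmul_smul, smul_smul] <;>
      module
  · apply frob_ext2 <;>
      simp only [LinearMap.comp_apply, LinearMap.smul_apply, LinearEquiv.coe_coe,
        LinearMap.id_coe, id_eq, hΔ1, hΔX, map_add, map_sub, map_smul,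
        TensorProduct.map_tmul, TensorProduct.assoc_tmul, TensorProduct.assoc_symm_tmul,
        LinearMap.mul'_apply, hXsq, mul_one, one_mul,
        smul_add, smul_sub, tmul_add, add_tmul, tmul_sub, sub_tmul,
        TensorProduct.smul_tmul, TensorProduct.tmul_smul, smul_smul] <;>
      module
  · apply frob_ext2 <;>
      simp only [LinearMap.comp_apply, LinearMap.smul_apply, LinearEquiv.coe_coe,
        LinearMap.id_coe, id_eq, hΔ1, hΔX, map_add, map_sub, map_smul,
        TensorProduct.map_tmul, TensorProduct.assoc_tmul, TensorProduct.assoc_symm_tmul,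
        LinearMap.mul'_apply, hXsq, mul_one, one_mul,
        smul_add, smul_sub, tmul_add, add_tmul, tmul_sub, sub_tmul,
        TensorProduct.smul_tmul, TensorProduct.tmul_smul, smul_smul] <;>
      module
end
end

section
/- The cutting-neck relation (CN) of the dot-free sl(2) foam theory holds for the TQFT structure maps: for every x ∈ A, x = (i/2)·ε_C(m(Δ_C(z₁*(x))))·1 + (i/2)·ε_W(x)·z₁(m(Δ_C(1))); equivalently, id_A = (i/2)·[ι_W ∘ (ε_C ∘ m ∘ Δ_C ∘ z₁*)] + (i/2)·[(z₁ ∘ m ∘ Δ_C ∘ ι_C) ∘ ε_W], where ι_C = ι_W : R → A is the unit map. -/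
open TensorProduct Polynomial

noncomputable section

variable {R : Type*} [CommRing R]

lemma frobX_sq (a h : R) : (FrobX a h) ^ 2 = h • FrobX a h + a • 1 := by
  have H := AdjoinRoot.eval₂_root (X ^ 2 - C h * X - C a : R[X])
  simp only [eval₂_sub, eval₂_pow, eval₂_X, eval₂_mul, eval₂_C] at H
  rw [Algebra.smul_def, Algebra.smul_def, mul_one, AdjoinRoot.algebraMap_eq]
  linear_combination H

lemma frobA_decomp [Nontrivial R] (a h : R) (x : FrobA a h) :
    ∃ p q : R, x = p • 1 + q • FrobX a h := by
  have hm : (X ^ 2 - C h * X - C a : R[X]).Monic := by monicity!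
  obtain ⟨p, rfl⟩ := AdjoinRoot.mk_surjective x
  set f : R[X] := X ^ 2 - C h * X - C a with hf
  refine ⟨(p %ₘ f).coeff 0, (p %ₘ f).coeff 1, ?_⟩
  have h2 : f.degree = 2 := by rw [hf]; compute_degree!
  have h1 : p %ₘ f = C ((p %ₘ f).coeff 1) * X + C ((p %ₘ f).coeff 0) := by
    apply Polynomial.eq_X_add_C_of_degree_le_one
    have hlt := Polynomial.degree_modByMonic_lt p hm
    rw [h2] at hlt
    exact Order.le_of_lt_succ (by exact_mod_cast hlt)
  calc AdjoinRoot.mk f p = AdjoinRoot.mk f (p %ₘ f + f * (p /ₘ f)) := by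
        rw [Polynomial.modByMonic_add_div p f]
    _ = AdjoinRoot.mk f (p %ₘ f) := by
        rw [map_add, map_mul, AdjoinRoot.mk_self, zero_mul, add_zero]
    _ = _ := by
        conv_lhs => rw [h1]
        rw [map_add, map_mul, AdjoinRoot.mk_X, AdjoinRoot.mk_C, AdjoinRoot.mk_C,
          ← AdjoinRoot.algebraMap_eq, ← Algebra.smul_def, Algebra.algebraMap_eq_smul_one, add_comm]

/-- the cutting-neck relation (CN):
`x = (i/2)·ε_C(m(Δ_C(z₁*(x))))·1 + (i/2)·ε_W(x)·z₁(m(Δ_C(1)))` for every `x ∈ A`. -/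
theorem cutting_neck (a h i : R) [Invertible (2 : R)] (hi : i ^ 2 = -1)
    (ΔC : FrobA a h →ₗ[R] FrobA a h ⊗[R] FrobA a h)
    (hΔ1 : ΔC 1 = (1 : FrobA a h) ⊗ₜ[R] FrobX a h + FrobX a h ⊗ₜ[R] (1 : FrobA a h)
      - h • ((1 : FrobA a h) ⊗ₜ[R] (1 : FrobA a h)))
    (hΔX : ΔC (FrobX a h) = FrobX a h ⊗ₜ[R] FrobX a h
      + a • ((1 : FrobA a h) ⊗ₜ[R] (1 : FrobA a h)))
    (εC εW : FrobA a h →ₗ[R] R)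
    (hεC1 : εC 1 = 0) (hεCX : εC (FrobX a h) = 1)
    (hεW1 : εW 1 = 0) (hεWX : εW (FrobX a h) = -i)
    (z1 z1s : FrobA a h →ₗ[R] FrobA a h)
    (hz1 : z1 = LinearMap.id)
    (hz1s : ∀ x : FrobA a h, z1s x = (-i) • x) :
    ∀ x : FrobA a h,
      x = (i * ⅟(2 : R) * εC (LinearMap.mul' R (FrobA a h) (ΔC (z1s x)))) • (1 : FrobA a h)
        + (i * ⅟(2 : R) * εW x) • z1 (LinearMap.mul' R (FrobA a h) (ΔC 1)) := by
  rcases subsingleton_or_nontrivial R with hR | hR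
  · have : Subsingleton (FrobA a h) :=
      Function.Surjective.subsingleton (AdjoinRoot.mk_surjective (g := X ^ 2 - C h * X - C a))
    intro x
    exact Subsingleton.elim _ _
  · intro x
    obtain ⟨p, q, rfl⟩ := frobA_decomp a h x
    have hmul1 : LinearMap.mul' R (FrobA a h) (ΔC 1)
        = (2 : R) • FrobX a h - h • 1 := by
      rw [hΔ1]
      simp only [map_add, map_sub, map_smul, LinearMap.mul'_apply, one_mul, mul_one]
      module
    have hmulX : LinearMap.mul' R (FrobA a h) (ΔC (FrobX a h))
        = h • FrobX a h + (2 * a) • 1 := by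
      rw [hΔX]
      simp only [map_add, map_smul, LinearMap.mul'_apply, mul_one]
      rw [← pow_two, frobX_sq]
      module
    rw [hz1s, hz1]
    simp only [smul_add, map_add, map_smul, hmul1, hmulX, hεC1, hεCX, hεW1, hεWX,
      map_sub, LinearMap.id_coe, id_eq, smul_eq_mul, mul_zero, mul_one, smul_smul]
    match_scalars
    · linear_combination (p * ⅟(2:R) * 2) * hi - p * invOf_mul_self (2:R)
    · linear_combination (q * ⅟(2:R) * 2) * hi - q * invOf_mul_self (2:R)
end
end
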